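/- Let a < b and for each n ∈ ℕ let a ≤ x₀⁽ⁿ⁾ < x₁⁽ⁿ⁾ < ⋯ < xₙ⁽ⁿ⁾ ≤ b be nodes with nonnegative weights w₀⁽ⁿ⁾, …, wₙ⁽ⁿ⁾ ≥ 0, defining the quadrature rule Iₙ(f) = Σᵢ₌₀ⁿ wᵢ⁽ⁿ⁾ f(xᵢ⁽ⁿ⁾). If Iₙ(p) → ∫ₐᵇ p(x) dx for every polynomial p, then Iₙ(f) → ∫ₐᵇ f(x) dx for every continuous function f on [a,b]. (In particular, Gaussian quadrature rules converge for every continuous integrand.) -/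

import Mathlib

open Filter Topology

/-- A quadrature rule with nonnegative weights that converges for every polynomial
converges for every continuous function on [a,b].
(In particular, Gaussian quadrature rules converge for every continuous integrand.) -/
theorem nonneg_quadrature_convergent_of_convergent_on_polynomials
    {a b : ℝ} (hab : a < b)
    (x : (n : ℕ) → Fin (n + 1) → Set.Icc a b) (hx : ∀ n, StrictMono (x n))
    (w : (n : ℕ) → Fin (n + 1) → ℝ) (hw : ∀ n i, 0 ≤ w n i)
    (hpoly : ∀ p : Polynomial ℝ,
      Tendsto (fun n => ∑ i, w n i * p.eval (x n i : ℝ)) atTop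
        (𝓝 (∫ t in a..b, p.eval t))) :
    ∀ f : C(Set.Icc a b, ℝ),
      Tendsto (fun n => ∑ i, w n i * f (x n i)) atTop
        (𝓝 (∫ t in a..b, f (Set.projIcc a b hab.le t))) := by
  intro f
  -- The total weight tends to b - a, hence is eventually bounded by M.
  have hW1 : Tendsto (fun n => ∑ i, w n i) atTop (𝓝 (b - a)) := by
    have := hpoly 1
    simpa using this
  set M : ℝ := b - a + 1 with hM
  have hM0 : 0 < M := by linarith
  have hWM : ∀ᶠ n in atTop, (∑ i, w n i) ≤ M :=
    hW1.eventually (eventually_le_nhds (by linarith : b - a < M))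
  rw [Metric.tendsto_nhds]
  intro ε hε
  set δ : ℝ := ε / (2 * (M + (b - a) + 1)) with hδ
  have hba : 0 < b - a := by linarith
  have hδ0 : 0 < δ := by positivity
  obtain ⟨p, hp⟩ := exists_polynomial_near_continuousMap a b f δ hδ0
  have hpw : ∀ z : Set.Icc a b, |p.eval (z : ℝ) - f z| ≤ δ := by
    intro z
    have := (p.toContinuousMapOn (Set.Icc a b) - f).norm_coe_le_norm z
    simpa [Real.norm_eq_abs] using this.trans hp.le
  -- eventually the polynomial quadrature is ε/2-close
  have h2 : ∀ᶠ n in atTop,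
      dist (∑ i, w n i * p.eval (x n i : ℝ)) (∫ t in a..b, p.eval t) < ε / 2 :=
    Metric.tendsto_nhds.mp (hpoly p) (ε / 2) (by positivity)
  -- integrability
  have hfc : Continuous fun t => f (Set.projIcc a b hab.le t) :=
    f.continuous.comp continuous_projIcc
  have hint_f : IntervalIntegrable (fun t => f (Set.projIcc a b hab.le t)) MeasureTheory.volume a b :=
    hfc.intervalIntegrable a b
  have hint_p : IntervalIntegrable (fun t => p.eval t) MeasureTheory.volume a b :=
    (p.continuous_aeval).intervalIntegrable a b
  -- third term bound
  have hI : |(∫ t in a..b, p.eval t) - ∫ t in a..b, f (Set.projIcc a b hab.le t)| ≤ δ * (b - a) := by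
    rw [← intervalIntegral.integral_sub hint_p hint_f]
    have := intervalIntegral.norm_integral_le_of_norm_le_const
      (C := δ) (f := fun t => p.eval t - f (Set.projIcc a b hab.le t))
      (a := a) (b := b) ?_
    · rw [Real.norm_eq_abs] at this
      calc |∫ t in a..b, (p.eval t - f (Set.projIcc a b hab.le t))| ≤ δ * |b - a| := this
        _ = δ * (b - a) := by rw [abs_of_pos hba]
    · intro t ht
      rw [Set.uIoc_of_le hab.le] at ht
      have ht' : t ∈ Set.Icc a b := ⟨ht.1.le, ht.2⟩
      have : Set.projIcc a b hab.le t = ⟨t, ht'⟩ := Set.projIcc_of_mem hab.le ht'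
      simpa [Real.norm_eq_abs, this] using hpw ⟨t, ht'⟩
  filter_upwards [hWM, h2] with n hWn h2n
  have hsum : |(∑ i, w n i * f (x n i)) - ∑ i, w n i * p.eval (x n i : ℝ)| ≤ δ * M := by
    rw [← Finset.sum_sub_distrib]
    calc |∑ i, (w n i * f (x n i) - w n i * p.eval (x n i : ℝ))|
        ≤ ∑ i, |w n i * f (x n i) - w n i * p.eval (x n i : ℝ)| := Finset.abs_sum_le_sum_abs _ _
      _ ≤ ∑ i, w n i * δ := by
          refine Finset.sum_le_sum fun i _ => ?_
          rw [← mul_sub, abs_mul, abs_of_nonneg (hw n i)]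
          have := hpw (x n i)
          rw [abs_sub_comm] at this
          exact mul_le_mul_of_nonneg_left this (hw n i)
      _ = (∑ i, w n i) * δ := by rw [Finset.sum_mul]
      _ ≤ M * δ := mul_le_mul_of_nonneg_right hWn hδ0.le
      _ = δ * M := mul_comm _ _
  have key : δ * M + δ * (b - a) ≤ ε / 2 := by
    have : δ * (M + (b - a)) ≤ δ * (M + (b - a) + 1) := by nlinarith
    have h1 : δ * (M + (b - a) + 1) = ε / 2 := by
      rw [hδ, div_mul_eq_mul_div, div_eq_div_iff (by linarith : (0:ℝ) < 2 * (M + (b - a) + 1)).ne' two_ne_zero]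
      ring
    nlinarith
  rw [Real.dist_eq]
  calc |(∑ i, w n i * f (x n i)) - ∫ t in a..b, f (Set.projIcc a b hab.le t)|
      ≤ |(∑ i, w n i * f (x n i)) - ∑ i, w n i * p.eval (x n i : ℝ)|
        + |(∑ i, w n i * p.eval (x n i : ℝ)) - ∫ t in a..b, f (Set.projIcc a b hab.le t)| := by
          exact abs_sub_le _ _ _
    _ ≤ δ * M + (|(∑ i, w n i * p.eval (x n i : ℝ)) - ∫ t in a..b, p.eval t|
        + δ * (b - a)) := by
          have h3 := abs_sub_le (∑ i, w n i * p.eval (x n i : ℝ)) (∫ t in a..b, p.eval t)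
            (∫ t in a..b, f (Set.projIcc a b hab.le t))
          have := hI
          linarith
    _ < δ * M + (ε / 2 + δ * (b - a)) := by
          rw [Real.dist_eq] at h2n
          linarith
    _ ≤ ε := by linarith
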